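/- arXiv:2306.00558 — 4 statements merged into one kernel-verified Lean document; each statement's English description precedes it below -/
import Mathlib

section
/- Let (H,R) be a quasitriangular bialgebra and suppose the universal R-matrix R lies in Z(H)⊗Z(H), where Z(H) is the center of H. Then H is cocommutative, and an element χ ∈ H⊗H satisfies both hexagon-type conditions (Id⊗Δ)(χ) = χ₁₂ + R₁₂⁻¹χ₁₃R₁₂ and (Δ⊗Id)(χ) = χ₂₃ + R₂₃⁻¹χ₁₃R₂₃ if and only if χ ∈ P(H)⊗P(H), where P(H) is the space of primitive elements of H. -/
open scoped TensorProduct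

noncomputable section

variable (k H : Type*) [Field k] [Ring H] [Bialgebra k H]

/-- leg embedding `a ⊗ b ↦ a ⊗ b ⊗ 1` into `H ⊗ (H ⊗ H)`. -/
def leg12 : H ⊗[k] H →ₐ[k] H ⊗[k] (H ⊗[k] H) :=
  Algebra.TensorProduct.map (AlgHom.id k H) Algebra.TensorProduct.includeLeft

/-- leg embedding `a ⊗ b ↦ 1 ⊗ a ⊗ b`. -/
def leg23 : H ⊗[k] H →ₐ[k] H ⊗[k] (H ⊗[k] H) :=
  Algebra.TensorProduct.includeRight

/-- leg embedding `a ⊗ b ↦ a ⊗ 1 ⊗ b`. -/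
def leg13 : H ⊗[k] H →ₐ[k] H ⊗[k] (H ⊗[k] H) :=
  Algebra.TensorProduct.map (AlgHom.id k H) Algebra.TensorProduct.includeRight

/-- `(Id ⊗ Δ)` as an algebra map `H ⊗ H → H ⊗ (H ⊗ H)`. -/
def idComul : H ⊗[k] H →ₐ[k] H ⊗[k] (H ⊗[k] H) :=
  Algebra.TensorProduct.map (AlgHom.id k H) (Bialgebra.comulAlgHom k H)

/-- `(Δ ⊗ Id)` as an algebra map `H ⊗ H → H ⊗ (H ⊗ H)` (after reassociation). -/
def comulId : H ⊗[k] H →ₐ[k] H ⊗[k] (H ⊗[k] H) :=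
  (Algebra.TensorProduct.assoc k k k H H H).toAlgHom.comp
    (Algebra.TensorProduct.map (Bialgebra.comulAlgHom k H) (AlgHom.id k H))

/-- the flip `a ⊗ b ↦ b ⊗ a` as an algebra map. -/
def swapT : H ⊗[k] H →ₐ[k] H ⊗[k] H := (Algebra.TensorProduct.comm k H H).toAlgHom

/-- A quasitriangular structure on the bialgebra `H`. -/
structure QT where
  R : H ⊗[k] H
  Rinv : H ⊗[k] H
  mul_inv : R * Rinv = 1
  inv_mul : Rinv * R = 1
  quasi_cocomm : ∀ h : H, swapT k H (Coalgebra.comul (R := k) h) * R = R * Coalgebra.comul (R := k) h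
  hex1 : idComul k H R = leg13 k H R * leg12 k H R
  hex2 : comulId k H R = leg13 k H R * leg23 k H R

/-- A pre-Cartier quasitriangular bialgebra structure on `H`. -/
structure PreCartier extends QT k H where
  χ : H ⊗[k] H
  chi_comm : ∀ h : H, χ * Coalgebra.comul (R := k) h = Coalgebra.comul (R := k) h * χ
  chi_hex1 : idComul k H χ = leg12 k H χ + leg12 k H Rinv * leg13 k H χ * leg12 k H R
  chi_hex2 : comulId k H χ = leg23 k H χ + leg23 k H Rinv * leg13 k H χ * leg23 k H R

/-- The submodule of primitive elements of `H`. -/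
def Primitives : Submodule k H where
  carrier := {x : H | Coalgebra.comul (R := k) x = x ⊗ₜ[k] (1 : H) + (1 : H) ⊗ₜ[k] x}
  add_mem' := by
    intro a b ha hb
    simp only [Set.mem_setOf_eq] at *
    rw [map_add, ha, hb, TensorProduct.add_tmul, TensorProduct.tmul_add]
    abel
  zero_mem' := by
    simp only [Set.mem_setOf_eq, map_zero, TensorProduct.zero_tmul, TensorProduct.tmul_zero,
      add_zero]
  smul_mem' := by
    intro c x hx
    simp only [Set.mem_setOf_eq] at *
    rw [map_smul, hx]
    simp [smul_add, TensorProduct.smul_tmul', TensorProduct.tmul_smul]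

/-! ### Auxiliary material -/

lemma tmul_mem_center {A B : Type*} [Ring A] [Ring B] [Algebra k A] [Algebra k B]
    {a : A} {b : B} (ha : a ∈ Subalgebra.center k A) (hb : b ∈ Subalgebra.center k B) :
    a ⊗ₜ[k] b ∈ Subalgebra.center k (A ⊗[k] B) := by
  rw [Subalgebra.mem_center_iff] at ha hb ⊢
  intro x
  induction x using TensorProduct.induction_on with
  | zero => simp
  | tmul c d => simp [Algebra.TensorProduct.tmul_mul_tmul, ha, hb]
  | add x y hx hy => rw [add_mul, mul_add, hx, hy]

/-- Images of elements of `Z(H) ⊗ Z(H)` under algebra maps sending central pure tensors to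
central elements are central. -/
lemma center_image {A : Type*} [Ring A] [Algebra k A] {x : H ⊗[k] H}
    (hx : x ∈ LinearMap.range
      (TensorProduct.map (Subalgebra.toSubmodule (Subalgebra.center k H)).subtype
        (Subalgebra.toSubmodule (Subalgebra.center k H)).subtype))
    (f : H ⊗[k] H →ₐ[k] A)
    (hf : ∀ z w : H, z ∈ Subalgebra.center k H → w ∈ Subalgebra.center k H →
      f (z ⊗ₜ[k] w) ∈ Subalgebra.center k A) :
    f x ∈ Subalgebra.center k A := by
  obtain ⟨y, rfl⟩ := hx
  induction y using TensorProduct.induction_on with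
  | zero => rw [map_zero, map_zero]; exact Subalgebra.zero_mem _
  | tmul z w =>
      rw [TensorProduct.map_tmul]
      exact hf _ _ z.2 w.2
  | add a b ha hb => rw [map_add, map_add]; exact Subalgebra.add_mem _ ha hb

lemma mem_Primitives {x : H} :
    x ∈ Primitives k H ↔
      Coalgebra.comul (R := k) x = x ⊗ₜ[k] (1 : H) + (1 : H) ⊗ₜ[k] x := Iff.rfl

/-- The "primitivity defect" map `x ↦ Δ x - x ⊗ 1 - 1 ⊗ x`. -/
def Dmap : H →ₗ[k] H ⊗[k] H :=
  Coalgebra.comul - ((TensorProduct.mk k H H).flip 1 + TensorProduct.mk k H H 1)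

lemma Primitives_eq_ker : Primitives k H = LinearMap.ker (Dmap k H) := by
  ext x
  rw [mem_Primitives, LinearMap.mem_ker, Dmap, LinearMap.sub_apply, LinearMap.add_apply,
    sub_eq_zero]
  simp [TensorProduct.mk_apply, LinearMap.flip_apply]

lemma idComul_apply (x : H ⊗[k] H) :
    idComul k H x = LinearMap.lTensor H (Coalgebra.comul (R := k)) x := by
  have h : (idComul k H).toLinearMap = LinearMap.lTensor H (Coalgebra.comul (R := k)) :=
    TensorProduct.ext' fun a b => by
      simp [idComul, Bialgebra.comulAlgHom_apply]
  simpa using DFunLike.congr_fun h x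

lemma leg12_apply (x : H ⊗[k] H) :
    leg12 k H x = LinearMap.lTensor H ((TensorProduct.mk k H H).flip 1) x := by
  have h : (leg12 k H).toLinearMap = LinearMap.lTensor H ((TensorProduct.mk k H H).flip 1) :=
    TensorProduct.ext' fun a b => by
      simp [leg12]
  simpa using DFunLike.congr_fun h x

lemma leg13_apply (x : H ⊗[k] H) :
    leg13 k H x = LinearMap.lTensor H (TensorProduct.mk k H H 1) x := by
  have h : (leg13 k H).toLinearMap = LinearMap.lTensor H (TensorProduct.mk k H H 1) :=
    TensorProduct.ext' fun a b => by
      simp [leg13]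
  simpa using DFunLike.congr_fun h x

lemma comulId_apply (x : H ⊗[k] H) :
    comulId k H x = (Algebra.TensorProduct.assoc k k k H H H)
      (LinearMap.rTensor H (Coalgebra.comul (R := k)) x) := by
  have h : (comulId k H).toLinearMap =
      (Algebra.TensorProduct.assoc k k k H H H).toLinearMap ∘ₗ
        LinearMap.rTensor H (Coalgebra.comul (R := k)) :=
    TensorProduct.ext' fun a b => by
      simp [comulId, Bialgebra.comulAlgHom_apply]
  exact DFunLike.congr_fun h x

lemma leg13_apply' (x : H ⊗[k] H) :
    leg13 k H x = (Algebra.TensorProduct.assoc k k k H H H)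
      (LinearMap.rTensor H ((TensorProduct.mk k H H).flip 1) x) := by
  have h : (leg13 k H).toLinearMap =
      (Algebra.TensorProduct.assoc k k k H H H).toLinearMap ∘ₗ
        LinearMap.rTensor H ((TensorProduct.mk k H H).flip 1) :=
    TensorProduct.ext' fun a b => by
      simp [leg13]
  exact DFunLike.congr_fun h x

lemma leg23_apply (x : H ⊗[k] H) :
    leg23 k H x = (Algebra.TensorProduct.assoc k k k H H H)
      (LinearMap.rTensor H (TensorProduct.mk k H H 1) x) := by
  have h : (leg23 k H).toLinearMap =
      (Algebra.TensorProduct.assoc k k k H H H).toLinearMap ∘ₗ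
        LinearMap.rTensor H (TensorProduct.mk k H H 1) :=
    TensorProduct.ext' fun a b => by
      simp [leg23]
  exact DFunLike.congr_fun h x

/-- The first (reduced) hexagon condition is membership in the kernel of `Id ⊗ D`. -/
lemma cond1_iff (χ : H ⊗[k] H) :
    idComul k H χ = leg12 k H χ + leg13 k H χ ↔
      LinearMap.lTensor H (Dmap k H) χ = 0 := by
  have h : LinearMap.lTensor H (Dmap k H) χ =
      idComul k H χ - (leg12 k H χ + leg13 k H χ) := by
    simp only [Dmap, LinearMap.lTensor_sub, LinearMap.lTensor_add, LinearMap.sub_apply,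
      LinearMap.add_apply, idComul_apply, leg12_apply, leg13_apply]
  rw [h, sub_eq_zero]

/-- The second (reduced) hexagon condition is membership in the kernel of `D ⊗ Id`. -/
lemma cond2_iff (χ : H ⊗[k] H) :
    comulId k H χ = leg23 k H χ + leg13 k H χ ↔
      LinearMap.rTensor H (Dmap k H) χ = 0 := by
  have h : (Algebra.TensorProduct.assoc k k k H H H) (LinearMap.rTensor H (Dmap k H) χ) =
      comulId k H χ - (leg23 k H χ + leg13 k H χ) := by
    simp only [Dmap, LinearMap.rTensor_sub, LinearMap.rTensor_add, LinearMap.sub_apply,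
      LinearMap.add_apply, map_sub, map_add, comulId_apply, leg13_apply', leg23_apply]
    abel
  rw [← sub_eq_zero, ← h, ← map_zero (Algebra.TensorProduct.assoc k k k H H H)]
  exact ⟨fun hh => (Algebra.TensorProduct.assoc k k k H H H).injective hh,
    fun hh => by rw [hh]⟩

/-- The reduced hexagon conditions hold iff `χ ∈ P(H) ⊗ P(H)`. -/
lemma reduced_iff (χ : H ⊗[k] H) :
    (idComul k H χ = leg12 k H χ + leg13 k H χ ∧
      comulId k H χ = leg23 k H χ + leg13 k H χ) ↔
      χ ∈ LinearMap.range
        (TensorProduct.map (Primitives k H).subtype (Primitives k H).subtype) := by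
  have hexact : Function.Exact ((Primitives k H).subtype) (Dmap k H) :=
    LinearMap.exact_iff.mpr (by rw [Submodule.range_subtype, Primitives_eq_ker])
  rw [cond1_iff, cond2_iff]
  constructor
  · rintro ⟨h1, h2⟩
    have hl : χ ∈ LinearMap.range (LinearMap.lTensor H (Primitives k H).subtype) := by
      have := (Module.Flat.lTensor_exact H hexact).linearMap_ker_eq
      rw [← this]; exact h1
    have hr : χ ∈ LinearMap.range (LinearMap.rTensor H (Primitives k H).subtype) := by
      have := (Module.Flat.rTensor_exact H hexact).linearMap_ker_eq
      rw [← this]; exact h2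
    obtain ⟨C, hC⟩ := Submodule.exists_isCompl (Primitives k H)
    set proj := (Primitives k H).linearProjOfIsCompl C hC with hproj
    set pr : H →ₗ[k] H := (Primitives k H).subtype ∘ₗ proj with hprdef
    have hpr : pr ∘ₗ (Primitives k H).subtype = (Primitives k H).subtype := by
      ext p
      simp [hprdef, hproj]
      exact Submodule.projectionOnto_apply_left hC p
    have hlfix : LinearMap.lTensor H pr χ = χ := by
      obtain ⟨y, rfl⟩ := hl
      rw [← LinearMap.comp_apply, ← LinearMap.lTensor_comp, hpr]
    have hrfix : LinearMap.rTensor H pr χ = χ := by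
      obtain ⟨y, rfl⟩ := hr
      rw [← LinearMap.comp_apply, ← LinearMap.rTensor_comp, hpr]
    have hmap : TensorProduct.map pr pr χ = χ := by
      rw [← LinearMap.rTensor_comp_lTensor, LinearMap.comp_apply, hlfix, hrfix]
    refine ⟨TensorProduct.map proj proj χ, ?_⟩
    rw [← LinearMap.comp_apply, ← TensorProduct.map_comp]
    exact hmap
  · rintro ⟨y, rfl⟩
    constructor
    · induction y using TensorProduct.induction_on with
      | zero => simp
      | tmul p q =>
          rw [TensorProduct.map_tmul, LinearMap.lTensor_tmul]
          have hq : Dmap k H ((Primitives k H).subtype q) = 0 := by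
            have h2 := q.2
            rw [mem_Primitives] at h2
            simp [Dmap, h2]
          rw [hq, TensorProduct.tmul_zero]
      | add a b ha hb => rw [map_add, map_add, ha, hb, add_zero]
    · induction y using TensorProduct.induction_on with
      | zero => simp
      | tmul p q =>
          rw [TensorProduct.map_tmul, LinearMap.rTensor_tmul]
          have hp : Dmap k H ((Primitives k H).subtype p) = 0 := by
            have h2 := p.2
            rw [mem_Primitives] at h2
            simp [Dmap, h2]
          rw [hp, TensorProduct.zero_tmul]
      | add a b ha hb => rw [map_add, map_add, ha, hb, add_zero]

/-- if the universal `R`-matrix of a quasitriangular bialgebra lies in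
`Z(H) ⊗ Z(H)`, then `H` is cocommutative, and `χ ∈ H ⊗ H` satisfies both hexagon-type
conditions iff `χ ∈ P(H) ⊗ P(H)`. -/
theorem central_R_matrix (Q : QT k H)
    (hR : Q.R ∈ LinearMap.range
      (TensorProduct.map (Subalgebra.toSubmodule (Subalgebra.center k H)).subtype
        (Subalgebra.toSubmodule (Subalgebra.center k H)).subtype)) :
    (∀ h : H, swapT k H (Coalgebra.comul (R := k) h) = Coalgebra.comul (R := k) h) ∧
    ∀ χ : H ⊗[k] H,
      (idComul k H χ = leg12 k H χ + leg12 k H Q.Rinv * leg13 k H χ * leg12 k H Q.R ∧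
        comulId k H χ = leg23 k H χ + leg23 k H Q.Rinv * leg13 k H χ * leg23 k H Q.R) ↔
      χ ∈ LinearMap.range
        (TensorProduct.map (Primitives k H).subtype (Primitives k H).subtype) := by
  -- centrality of R and of its legs
  have hRc : Q.R ∈ Subalgebra.center k (H ⊗[k] H) := by
    have := center_image k H hR (AlgHom.id k (H ⊗[k] H)) (fun z w hz hw => by
      simpa using tmul_mem_center k hz hw)
    simpa using this
  have h12 : leg12 k H Q.R ∈ Subalgebra.center k (H ⊗[k] (H ⊗[k] H)) := by
    refine center_image k H hR (leg12 k H) (fun z w hz hw => ?_)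
    have : leg12 k H (z ⊗ₜ[k] w) = z ⊗ₜ[k] (w ⊗ₜ[k] (1 : H)) := by
      simp [leg12]
    rw [this]
    exact tmul_mem_center k hz (tmul_mem_center k hw (Subalgebra.one_mem _))
  have h23 : leg23 k H Q.R ∈ Subalgebra.center k (H ⊗[k] (H ⊗[k] H)) := by
    refine center_image k H hR (leg23 k H) (fun z w hz hw => ?_)
    have : leg23 k H (z ⊗ₜ[k] w) = (1 : H) ⊗ₜ[k] (z ⊗ₜ[k] w) := by
      simp [leg23]
    rw [this]
    exact tmul_mem_center k (Subalgebra.one_mem _) (tmul_mem_center k hz hw)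
  constructor
  · -- cocommutativity
    intro h
    have hcomm := Q.quasi_cocomm h
    have hc : Q.R * Coalgebra.comul (R := k) h = Coalgebra.comul (R := k) h * Q.R :=
      ((Subalgebra.mem_center_iff.mp hRc) _).symm
    calc swapT k H (Coalgebra.comul (R := k) h)
        = swapT k H (Coalgebra.comul (R := k) h) * (Q.R * Q.Rinv) := by
          rw [Q.mul_inv, mul_one]
      _ = (swapT k H (Coalgebra.comul (R := k) h) * Q.R) * Q.Rinv := by rw [mul_assoc]
      _ = (Coalgebra.comul (R := k) h * Q.R) * Q.Rinv := by rw [hcomm, hc]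
      _ = Coalgebra.comul (R := k) h := by rw [mul_assoc, Q.mul_inv, mul_one]
  · -- the equivalence for χ
    intro χ
    have e12 : leg12 k H Q.Rinv * leg13 k H χ * leg12 k H Q.R = leg13 k H χ := by
      rw [mul_assoc, Subalgebra.mem_center_iff.mp h12 (leg13 k H χ), ← mul_assoc,
        ← map_mul, Q.inv_mul, map_one, one_mul]
    have e23 : leg23 k H Q.Rinv * leg13 k H χ * leg23 k H Q.R = leg13 k H χ := by
      rw [mul_assoc, Subalgebra.mem_center_iff.mp h23 (leg13 k H χ), ← mul_assoc,
        ← map_mul, Q.inv_mul, map_one, one_mul]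
    rw [e12, e23]
    exact reduced_iff k H χ

end
end

section
/- Let (g,[·,·]) be a Lie algebra over a field of characteristic zero and U(g) its universal enveloping algebra with trivial quasitriangular structure R = 1⊗1. Then χ ∈ U(g)⊗U(g) is an infinitesimal R-matrix if and only if χ ∈ g⊗g (i.e. χ is a sum of tensors of primitive elements) and χ is g-invariant, meaning (ad_x⊗Id + Id⊗ad_x)(χ) = 0 for all x ∈ g. -/
open scoped TensorProduct

noncomputable section

variable (k H : Type*) [Field k] [CharZero k] [Ring H] [Bialgebra k H]

namespace InfRAux

variable (k H : Type*) [Field k] [CharZero k] [Ring H] [Bialgebra k H]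

/-- `x ↦ x ⊗ 1 + 1 ⊗ x`. -/
def jmap : H →ₗ[k] H ⊗[k] H :=
  (TensorProduct.mk k H H).flip 1 + TensorProduct.mk k H H 1

lemma jmap_apply (x : H) : jmap k H x = x ⊗ₜ[k] (1 : H) + (1 : H) ⊗ₜ[k] x := rfl

/-- `Δ - j`. -/
def Dm : H →ₗ[k] H ⊗[k] H := (Coalgebra.comul (R := k)) - jmap k H

lemma ker_Dm : LinearMap.ker (Dm k H) = Primitives k H := by
  ext x
  simp [Dm, jmap_apply, sub_eq_zero, Primitives, LinearMap.mem_ker]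

lemma hex1_iff (χ : H ⊗[k] H) :
    idComul k H χ = leg12 k H χ + leg13 k H χ ↔ LinearMap.lTensor H (Dm k H) χ = 0 := by
  have h1 : (idComul k H).toLinearMap = LinearMap.lTensor H (Coalgebra.comul (R := k)) :=
    TensorProduct.ext' fun a b => by
      simp [idComul, Bialgebra.comulAlgHom_apply]
  have h2 : (leg12 k H).toLinearMap + (leg13 k H).toLinearMap
      = LinearMap.lTensor H (jmap k H) :=
    TensorProduct.ext' fun a b => by
      simp [leg12, leg13, jmap_apply, TensorProduct.tmul_add]
  have key : LinearMap.lTensor H (Dm k H) χ = idComul k H χ - (leg12 k H χ + leg13 k H χ) := by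
    rw [Dm, LinearMap.lTensor_sub, LinearMap.sub_apply]
    rw [show (LinearMap.lTensor H (Coalgebra.comul (R := k))) χ = idComul k H χ from
      (congrFun (congrArg DFunLike.coe h1) χ).symm]
    rw [show (LinearMap.lTensor H (jmap k H)) χ = leg12 k H χ + leg13 k H χ from
      (congrFun (congrArg DFunLike.coe h2) χ).symm]
  rw [key, sub_eq_zero]

lemma hex2_iff (χ : H ⊗[k] H) :
    comulId k H χ = leg23 k H χ + leg13 k H χ ↔ LinearMap.rTensor H (Dm k H) χ = 0 := by
  have h1 : (comulId k H).toLinearMap =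
      (TensorProduct.assoc k H H H).toLinearMap ∘ₗ
        LinearMap.rTensor H (Coalgebra.comul (R := k)) :=
    TensorProduct.ext' fun a b => by
      have hco : ∀ z : (H ⊗[k] H) ⊗[k] H, Algebra.TensorProduct.assoc k k k H H H z
          = TensorProduct.assoc k H H H z := fun z => rfl
      simp only [comulId, AlgHom.comp_toLinearMap, LinearMap.coe_comp, Function.comp_apply,
        AlgHom.toLinearMap_apply, Algebra.TensorProduct.map_tmul, AlgHom.coe_id, id_eq,
        Bialgebra.comulAlgHom_apply, LinearMap.rTensor_tmul, LinearEquiv.coe_coe,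
        AlgEquiv.toAlgHom_eq_coe, AlgEquiv.coe_algHom]
      exact hco _
  have h2 : (leg23 k H).toLinearMap + (leg13 k H).toLinearMap
      = (TensorProduct.assoc k H H H).toLinearMap ∘ₗ LinearMap.rTensor H (jmap k H) :=
    TensorProduct.ext' fun a b => by
      simp [leg23, leg13, jmap_apply, TensorProduct.add_tmul, TensorProduct.assoc_tmul]
      abel
  have key : (TensorProduct.assoc k H H H) (LinearMap.rTensor H (Dm k H) χ)
      = comulId k H χ - (leg23 k H χ + leg13 k H χ) := by
    rw [Dm, LinearMap.rTensor_sub, LinearMap.sub_apply, map_sub]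
    rw [show (TensorProduct.assoc k H H H) ((LinearMap.rTensor H (Coalgebra.comul (R := k))) χ)
        = comulId k H χ from (congrFun (congrArg DFunLike.coe h1) χ).symm]
    rw [show (TensorProduct.assoc k H H H) ((LinearMap.rTensor H (jmap k H)) χ)
        = leg23 k H χ + leg13 k H χ from (congrFun (congrArg DFunLike.coe h2) χ).symm]
  constructor
  · intro h
    have h0 : (TensorProduct.assoc k H H H) (LinearMap.rTensor H (Dm k H) χ) = 0 := by
      rw [key, h, sub_self]
    exact (LinearEquiv.map_eq_zero_iff _).mp h0
  · intro h
    rw [h, LinearEquiv.map_zero] at key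
    exact sub_eq_zero.mp key.symm

lemma mul_tmul_one (a : H) (χ : H ⊗[k] H) :
    (a ⊗ₜ[k] (1 : H)) * χ = LinearMap.rTensor H (LinearMap.mulLeft k a) χ := by
  have : LinearMap.mulLeft k (a ⊗ₜ[k] (1 : H)) = LinearMap.rTensor H (LinearMap.mulLeft k a) :=
    TensorProduct.ext' fun u v => by
      simp [Algebra.TensorProduct.tmul_mul_tmul]
  exact congrFun (congrArg DFunLike.coe this) χ

lemma mul_one_tmul (a : H) (χ : H ⊗[k] H) :
    ((1 : H) ⊗ₜ[k] a) * χ = LinearMap.lTensor H (LinearMap.mulLeft k a) χ := by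
  have : LinearMap.mulLeft k ((1 : H) ⊗ₜ[k] a) = LinearMap.lTensor H (LinearMap.mulLeft k a) :=
    TensorProduct.ext' fun u v => by
      simp [Algebra.TensorProduct.tmul_mul_tmul]
  exact congrFun (congrArg DFunLike.coe this) χ

lemma tmul_one_mul (a : H) (χ : H ⊗[k] H) :
    χ * (a ⊗ₜ[k] (1 : H)) = LinearMap.rTensor H (LinearMap.mulRight k a) χ := by
  have : LinearMap.mulRight k (a ⊗ₜ[k] (1 : H)) = LinearMap.rTensor H (LinearMap.mulRight k a) :=
    TensorProduct.ext' fun u v => by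
      simp [Algebra.TensorProduct.tmul_mul_tmul]
  exact congrFun (congrArg DFunLike.coe this) χ

lemma one_tmul_mul (a : H) (χ : H ⊗[k] H) :
    χ * ((1 : H) ⊗ₜ[k] a) = LinearMap.lTensor H (LinearMap.mulRight k a) χ := by
  have : LinearMap.mulRight k ((1 : H) ⊗ₜ[k] a) = LinearMap.lTensor H (LinearMap.mulRight k a) :=
    TensorProduct.ext' fun u v => by
      simp [Algebra.TensorProduct.tmul_mul_tmul]
  exact congrFun (congrArg DFunLike.coe this) χ

end InfRAux


/-- for the universal enveloping algebra `H = U(g)` of a Lie algebra `g` over a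
field of characteristic zero (presented as a bialgebra generated by a copy `ι : g → H` of `g`
whose image is exactly the set of primitives, with `ι[x,y] = ιx·ιy − ιy·ιx`), with trivial
quasitriangular structure `R = 1⊗1`, an element `χ ∈ H⊗H` is an infinitesimal `R`-matrix iff
`χ ∈ g⊗g` and `χ` is `g`-invariant: `(ad_x ⊗ Id + Id ⊗ ad_x)(χ) = 0` for all `x ∈ g`. -/
theorem universal_enveloping_infinitesimal_R_matrix
    {L : Type*} [LieRing L] [LieAlgebra k L]
    (ι : L →ₗ[k] H) (hinj : Function.Injective ι)
    (hbrk : ∀ x y : L, ι ⁅x, y⁆ = ι x * ι y - ι y * ι x)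
    (hprim : LinearMap.range ι = Primitives k H)
    (hgen : Algebra.adjoin k (Set.range ι) = ⊤)
    (χ : H ⊗[k] H) :
    ((∀ h : H, χ * Coalgebra.comul (R := k) h = Coalgebra.comul (R := k) h * χ) ∧
      idComul k H χ = leg12 k H χ + leg13 k H χ ∧
      comulId k H χ = leg23 k H χ + leg13 k H χ) ↔
    (χ ∈ LinearMap.range (TensorProduct.map ι ι) ∧
      ∀ x : L,
        LinearMap.rTensor H (LinearMap.mulLeft k (ι x) - LinearMap.mulRight k (ι x)) χ +
          LinearMap.lTensor H (LinearMap.mulLeft k (ι x) - LinearMap.mulRight k (ι x)) χ = 0) := by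
  classical
  have hxprim : ∀ x : L,
      Coalgebra.comul (R := k) (ι x) = ι x ⊗ₜ[k] (1 : H) + (1 : H) ⊗ₜ[k] (ι x) := by
    intro x
    have hx : ι x ∈ Primitives k H := hprim ▸ LinearMap.mem_range_self ι x
    exact hx
  constructor
  · rintro ⟨hc, h1, h2⟩
    have hl : LinearMap.lTensor H (InfRAux.Dm k H) χ = 0 := (InfRAux.hex1_iff k H χ).mp h1
    have hr : LinearMap.rTensor H (InfRAux.Dm k H) χ = 0 := (InfRAux.hex2_iff k H χ).mp h2
    refine ⟨?_, ?_⟩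
    · set P := LinearMap.ker (InfRAux.Dm k H) with hP
      have exl := Module.Flat.lTensor_exact (R := k) H
        (LinearMap.exact_subtype_ker_map (InfRAux.Dm k H))
      have exr := Module.Flat.rTensor_exact (R := k) H
        (LinearMap.exact_subtype_ker_map (InfRAux.Dm k H))
      obtain ⟨η, hη⟩ := (exl χ).mp hl
      obtain ⟨ξ, hξ⟩ := (exr χ).mp hr
      obtain ⟨q, hq⟩ := Submodule.exists_isCompl P
      set pr : H →ₗ[k] P := P.projectionOnto q hq with hpr
      set π : H →ₗ[k] H := P.subtype ∘ₗ pr with hπdef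
      have hπ : π ∘ₗ P.subtype = P.subtype := by
        ext x
        simp [hπdef, hpr, Submodule.projectionOnto_apply_left]
      have h3 : LinearMap.lTensor H π χ = χ := by
        rw [← hη, ← LinearMap.comp_apply, ← LinearMap.lTensor_comp, hπ]
      have hmapcomp : TensorProduct.map P.subtype π
          = TensorProduct.map P.subtype P.subtype ∘ₗ LinearMap.lTensor (↥P) pr :=
        TensorProduct.ext' fun a b => rfl
      have h4 : χ = TensorProduct.map P.subtype P.subtype (LinearMap.lTensor (↥P) pr ξ) := by
        conv_lhs => rw [← h3, ← hξ]
        rw [← LinearMap.comp_apply, LinearMap.lTensor_comp_rTensor, hmapcomp,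
          LinearMap.comp_apply]
      have hmem : ∀ x : L, ι x ∈ P := by
        intro x
        rw [hP, InfRAux.ker_Dm, ← hprim]
        exact LinearMap.mem_range_self ι x
      set e : L →ₗ[k] P := ι.codRestrict P hmem with he
      have hesurj : Function.Surjective e := by
        rintro ⟨y, hy⟩
        rw [hP, InfRAux.ker_Dm, ← hprim] at hy
        obtain ⟨x, hx⟩ := hy
        exact ⟨x, Subtype.ext hx⟩
      have hcomp : TensorProduct.map ι ι
          = TensorProduct.map P.subtype P.subtype ∘ₗ TensorProduct.map e e :=
        TensorProduct.ext' fun a b => rfl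
      obtain ⟨ζ, hζ⟩ := TensorProduct.map_surjective hesurj hesurj (LinearMap.lTensor (↥P) pr ξ)
      exact ⟨ζ, by rw [hcomp, LinearMap.comp_apply, hζ, ← h4]⟩
    · intro x
      have hcx := hc (ι x)
      rw [hxprim x, mul_add, add_mul, InfRAux.tmul_one_mul, InfRAux.one_tmul_mul,
        InfRAux.mul_tmul_one, InfRAux.mul_one_tmul] at hcx
      rw [LinearMap.rTensor_sub, LinearMap.lTensor_sub, LinearMap.sub_apply, LinearMap.sub_apply]
      rw [sub_add_sub_comm, ← hcx]
      exact sub_self _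
  · rintro ⟨⟨ξ, hξ⟩, hinv⟩
    have hcomm : ∀ x : L,
        χ * Coalgebra.comul (R := k) (ι x) = Coalgebra.comul (R := k) (ι x) * χ := by
      intro x
      have h0 := hinv x
      rw [LinearMap.rTensor_sub, LinearMap.lTensor_sub, LinearMap.sub_apply,
        LinearMap.sub_apply] at h0
      rw [hxprim x, mul_add, add_mul, InfRAux.tmul_one_mul, InfRAux.one_tmul_mul,
        InfRAux.mul_tmul_one, InfRAux.mul_one_tmul]
      have h1 : LinearMap.rTensor H (LinearMap.mulLeft k (ι x)) χ
          + LinearMap.lTensor H (LinearMap.mulLeft k (ι x)) χ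
          - (LinearMap.rTensor H (LinearMap.mulRight k (ι x)) χ
            + LinearMap.lTensor H (LinearMap.mulRight k (ι x)) χ) = 0 := by
        rw [sub_add_sub_comm] at h0; exact h0
      exact (sub_eq_zero.mp h1).symm
    refine ⟨?_, ?_, ?_⟩
    · intro h
      have hS : Algebra.adjoin k (Set.range ι) ≤
          Subalgebra.comap (Bialgebra.comulAlgHom k H) (Subalgebra.centralizer k {χ}) := by
        apply Algebra.adjoin_le
        rintro _ ⟨x, rfl⟩
        simp only [SetLike.mem_coe, Subalgebra.mem_comap, Subalgebra.mem_centralizer_iff,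
          Set.mem_singleton_iff, Bialgebra.comulAlgHom_apply]
        rintro g rfl
        exact hcomm x
      have hh : h ∈ Algebra.adjoin k (Set.range ι) := hgen ▸ Algebra.mem_top
      have := hS hh
      simp only [Subalgebra.mem_comap, Subalgebra.mem_centralizer_iff,
        Set.mem_singleton_iff, Bialgebra.comulAlgHom_apply] at this
      exact this χ rfl
    · rw [InfRAux.hex1_iff, ← hξ, ← LinearMap.comp_apply]
      have hz : LinearMap.lTensor H (InfRAux.Dm k H) ∘ₗ TensorProduct.map ι ι = 0 :=
        TensorProduct.ext' fun x y => by
          simp [InfRAux.Dm, InfRAux.jmap_apply, hxprim y]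
      rw [hz]
      rfl
    · rw [InfRAux.hex2_iff, ← hξ, ← LinearMap.comp_apply]
      have hz : LinearMap.rTensor H (InfRAux.Dm k H) ∘ₗ TensorProduct.map ι ι = 0 :=
        TensorProduct.ext' fun x y => by
          simp [InfRAux.Dm, InfRAux.jmap_apply, hxprim x]
      rw [hz]
      rfl


end
end

section
/- For Sweedler's Hopf algebra H with triangular structure R_λ and infinitesimal R-matrix χ_α = α·(xg⊗x), the identity R_λ·χ_α = −χ_α^op·R_λ holds (where χ_α^op = α·(x⊗xg)). Consequently, if χ_α additionally satisfies R_λ·χ_α = χ_α^op·R_λ, then α = 0; i.e., the only Cartier structure on (H, R_λ) is χ = 0. -/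
open scoped TensorProduct

noncomputable section

variable (k H : Type*) [Field k] [Ring H] [Bialgebra k H]

private lemma aux_extract (k H : Type*) [Field k] [Ring H] [Algebra k H]
    (h2 : (2:k) ≠ 0) (g x : H)
    (hli : LinearIndependent k ![(1 : H), g, x, x * g])
    (hspan : ⊤ ≤ Submodule.span k {(1 : H), g, x, x * g})
    (α : k)
    (hzero : (α * 2⁻¹) • ((x*g) ⊗ₜ[k] x - (x*g) ⊗ₜ[k] (x*g) - x ⊗ₜ[k] x - x ⊗ₜ[k] (x*g)) = 0) :
    α = 0 := by
  have hsp : ⊤ ≤ Submodule.span k (Set.range ![(1 : H), g, x, x * g]) := by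
    refine le_trans hspan (Submodule.span_le.2 ?_)
    intro y hy
    apply Submodule.subset_span
    simp only [Set.mem_insert_iff, Set.mem_singleton_iff] at hy
    rcases hy with h|h|h|h
    · exact ⟨0, h.symm⟩
    · exact ⟨1, h.symm⟩
    · exact ⟨2, h.symm⟩
    · exact ⟨3, h.symm⟩
  let B := Module.Basis.mk hli hsp
  let F : H ⊗[k] H →ₗ[k] k :=
    (TensorProduct.lid k k).toLinearMap ∘ₗ TensorProduct.map (B.coord 3) (B.coord 2)
  have hF := congrArg F hzero
  have c33 : B.coord 3 (x * g) = 1 := by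
    exact Module.Basis.mk_coord_apply_eq (hli:=hli) (hsp:=hsp) 3
  have c22 : B.coord 2 x = 1 := by
    exact Module.Basis.mk_coord_apply_eq (hli:=hli) (hsp:=hsp) 2
  have c32 : B.coord 3 x = 0 := by
    exact Module.Basis.mk_coord_apply_ne (hli:=hli) (hsp:=hsp) (i:=3) (j:=2) (by decide)
  have c23 : B.coord 2 (x * g) = 0 := by
    exact Module.Basis.mk_coord_apply_ne (hli:=hli) (hsp:=hsp) (i:=2) (j:=3) (by decide)
  simp only [F, map_smul, map_sub, map_zero, LinearMap.comp_apply, TensorProduct.map_tmul,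
    LinearEquiv.coe_coe, TensorProduct.lid_tmul, c33, c22, c32, c23, smul_eq_mul,
    one_mul, mul_one, mul_zero, zero_mul, sub_zero, zero_sub, smul_zero] at hF
  field_simp at hF
  simpa using hF

/-- for Sweedler's Hopf algebra with triangular structure `R_λ` and
infinitesimal `R`-matrix `χ_α = α • (xg ⊗ x)`, one has `R_λ χ_α = −χ_αᵒᵖ R_λ`; consequently if
also `R_λ χ_α = χ_αᵒᵖ R_λ` then `α = 0`, i.e. the only Cartier structure on `(H, R_λ)` is `0`. -/
theorem sweedler_Cartier_only_trivial (h2 : (2 : k) ≠ 0)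
    (g x : H) (hg : g * g = 1) (hx : x * x = 0) (hxg : x * g = -(g * x))
    (hΔg : Coalgebra.comul (R := k) g = g ⊗ₜ[k] g)
    (hΔx : Coalgebra.comul (R := k) x = x ⊗ₜ[k] (1 : H) + g ⊗ₜ[k] x)
    (hεg : Coalgebra.counit (R := k) g = (1 : k))
    (hεx : Coalgebra.counit (R := k) x = (0 : k))
    (hli : LinearIndependent k ![(1 : H), g, x, x * g])
    (hspan : ⊤ ≤ Submodule.span k {(1 : H), g, x, x * g})
    (l : k) (ν : H) (hν : ν = (2 : k)⁻¹ • ((1 : H) - g))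
    (Rl : H ⊗[k] H)
    (hRl : Rl = 1 - (2 : k) • (ν ⊗ₜ[k] ν) +
      l • (x ⊗ₜ[k] x + (2 : k) • ((x * ν) ⊗ₜ[k] (x * ν)) - (2 : k) • (x ⊗ₜ[k] (x * ν))))
    (α : k) (χ : H ⊗[k] H) (hχ : χ = α • ((x * g) ⊗ₜ[k] x)) :
    Rl * χ = -(swapT k H χ * Rl) ∧
      (Rl * χ = swapT k H χ * Rl → α = 0) := by
  have e4 : g * (x * g) = -x := by
    rw [← mul_assoc, show g * x = -(x*g) from by rw [hxg, neg_neg], neg_mul, mul_assoc, hg,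
      mul_one]
  have e3 : x * g * x = 0 := by rw [hxg, neg_mul, mul_assoc, hx, mul_zero, neg_zero]
  have e1 : x * (x * g) = 0 := by rw [← mul_assoc, hx, zero_mul]
  have e2 : x * g * (x * g) = 0 := by rw [mul_assoc, e4, mul_neg, hx, neg_zero]
  have e5 : x * g * g = x := by rw [mul_assoc, hg, mul_one]
  have hsw : swapT k H χ = α • (x ⊗ₜ[k] (x * g)) := by
    rw [hχ]
    simp [swapT, Algebra.TensorProduct.comm_tmul]
  have key : Rl * χ = -(swapT k H χ * Rl) := by
    rw [hsw]
    subst hν hRl hχ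
    simp only [Algebra.TensorProduct.one_def, mul_add, add_mul, mul_sub, sub_mul, smul_mul_assoc,
      mul_smul_comm, Algebra.TensorProduct.tmul_mul_tmul, smul_sub, smul_smul,
      one_mul, mul_one, smul_mul_smul_comm, hx, e1, e2, e3, e4, e5, hg,
      show g*x = -(x*g) from by rw [hxg, neg_neg],
      TensorProduct.sub_tmul, TensorProduct.tmul_sub, ← TensorProduct.smul_tmul',
      TensorProduct.tmul_smul, TensorProduct.neg_tmul, TensorProduct.tmul_neg,
      TensorProduct.zero_tmul, TensorProduct.tmul_zero, smul_zero, zero_smul, smul_neg]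
    match_scalars <;> (field_simp; try ring)
  have hval : Rl * χ = (α * 2⁻¹) •
      ((x*g) ⊗ₜ[k] x - (x*g) ⊗ₜ[k] (x*g) - x ⊗ₜ[k] x - x ⊗ₜ[k] (x*g)) := by
    subst hν hRl hχ
    simp only [Algebra.TensorProduct.one_def, mul_add, add_mul, mul_sub, sub_mul, smul_mul_assoc,
      mul_smul_comm, Algebra.TensorProduct.tmul_mul_tmul, smul_sub, smul_smul,
      one_mul, mul_one, smul_mul_smul_comm, hx, e1, e2, e3, e4, e5, hg,
      show g*x = -(x*g) from by rw [hxg, neg_neg],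
      TensorProduct.sub_tmul, TensorProduct.tmul_sub, ← TensorProduct.smul_tmul',
      TensorProduct.tmul_smul, TensorProduct.neg_tmul, TensorProduct.tmul_neg,
      TensorProduct.zero_tmul, TensorProduct.tmul_zero, smul_zero, zero_smul, smul_neg]
    match_scalars <;> (field_simp; try ring)
  refine ⟨key, fun h => ?_⟩
  have hz : Rl * χ = 0 := by
    have h2' : (2:k) • (Rl * χ) = 0 := by
      rw [two_smul]
      nth_rewrite 1 [h]
      rw [key]
      abel
    rcases smul_eq_zero.mp h2' with hc | hc
    · exact absurd hc h2
    · exact hc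
  exact aux_extract k H h2 g x hli hspan α (by rw [← hval, hz])

end
end

section
/- Let H be a cocommutative bialgebra with coquasitriangular structure R : H⊗H → k, and χ : H⊗H → k a linear map. Then (H,R,χ) is pre-Cartier if and only if χ is a biderivation, i.e. χ(a⊗bc) = χ(a⊗b)ε(c) + ε(b)χ(a⊗c) and χ(ab⊗c) = ε(a)χ(b⊗c) + ε(b)χ(a⊗c) for all a,b,c ∈ H. Moreover (H,R,χ) is Cartier if and only if χ is additionally symmetric: χ(a⊗b) = χ(b⊗a). -/
open scoped TensorProduct

noncomputable section

variable (k H : Type) [CommRing k] [Ring H] [Bialgebra k H]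

/-- Convolution product of two functionals on the coalgebra `H ⊗ H`. -/
def conv2 (f g : H ⊗[k] H →ₗ[k] k) : H ⊗[k] H →ₗ[k] k :=
  (LinearMap.mul' k k).comp ((TensorProduct.map f g).comp
    (Coalgebra.comul (R := k) (A := H ⊗[k] H)))

/-- Convolution product of two functionals on the coalgebra `H ⊗ (H ⊗ H)`. -/
def conv3 (f g : H ⊗[k] (H ⊗[k] H) →ₗ[k] k) : H ⊗[k] (H ⊗[k] H) →ₗ[k] k :=
  (LinearMap.mul' k k).comp ((TensorProduct.map f g).comp
    (Coalgebra.comul (R := k) (A := H ⊗[k] (H ⊗[k] H))))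

/-- `f₁₂(a⊗b⊗c) = f(a⊗b)ε(c)`. -/
def f12 (f : H ⊗[k] H →ₗ[k] k) : H ⊗[k] (H ⊗[k] H) →ₗ[k] k :=
  (LinearMap.mul' k k).comp
    ((TensorProduct.map f (Coalgebra.counit (R := k) (A := H))).comp
      (TensorProduct.assoc k H H H).symm.toLinearMap)

/-- `f₂₃(a⊗b⊗c) = ε(a)f(b⊗c)`. -/
def f23 (f : H ⊗[k] H →ₗ[k] k) : H ⊗[k] (H ⊗[k] H) →ₗ[k] k :=
  (LinearMap.mul' k k).comp
    (TensorProduct.map (Coalgebra.counit (R := k) (A := H)) f)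

/-- `f₁₃(a⊗b⊗c) = ε(b)f(a⊗c)`. -/
def f13 (f : H ⊗[k] H →ₗ[k] k) : H ⊗[k] (H ⊗[k] H) →ₗ[k] k :=
  (f12 k H f).comp (LinearMap.lTensor H (TensorProduct.comm k H H).toLinearMap)

/-- Convolution `f ∗ g` of a scalar-valued `f` with an `H`-valued `g` on `H ⊗ H`. -/
def convSM (f : H ⊗[k] H →ₗ[k] k) (g : H ⊗[k] H →ₗ[k] H) : H ⊗[k] H →ₗ[k] H :=
  (TensorProduct.lid k H).toLinearMap.comp ((TensorProduct.map f g).comp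
    (Coalgebra.comul (R := k) (A := H ⊗[k] H)))

/-- Convolution `g ∗ f` of an `H`-valued `g` with a scalar-valued `f` on `H ⊗ H`. -/
def convMS (g : H ⊗[k] H →ₗ[k] H) (f : H ⊗[k] H →ₗ[k] k) : H ⊗[k] H →ₗ[k] H :=
  (TensorProduct.rid k H).toLinearMap.comp ((TensorProduct.map g f).comp
    (Coalgebra.comul (R := k) (A := H ⊗[k] H)))

/-- `(m ⊗ Id) : H ⊗ (H ⊗ H) → H ⊗ H` (after reassociation). -/
def mulIdC3 : H ⊗[k] (H ⊗[k] H) →ₗ[k] H ⊗[k] H :=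
  (LinearMap.rTensor H (LinearMap.mul' k H)).comp
    (TensorProduct.assoc k H H H).symm.toLinearMap

/-- `(Id ⊗ m) : H ⊗ (H ⊗ H) → H ⊗ H`. -/
def idMulC3 : H ⊗[k] (H ⊗[k] H) →ₗ[k] H ⊗[k] H :=
  LinearMap.lTensor H (LinearMap.mul' k H)

namespace CartAux
set_option linter.unusedSectionVars false

open TensorProduct LinearMap Coalgebra

variable {K : Type} [CommRing K]
variable {C D : Type} [AddCommGroup C] [Module K C] [Coalgebra K C]
  [AddCommGroup D] [Module K D] [Coalgebra K D]

/-- convolution of functionals -/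
def cv (f g : C →ₗ[K] K) : C →ₗ[K] K :=
  (LinearMap.mul' K K).comp ((TensorProduct.map f g).comp (Coalgebra.comul (R := K)))

theorem cv_comm (hc : ∀ c : C, TensorProduct.comm K C C (comul (R := K) c) = comul (R := K) c)
    (f g : C →ₗ[K] K) : cv f g = cv g f := by
  ext c
  simp only [cv, LinearMap.comp_apply]
  conv_lhs => rw [← hc c]
  generalize (comul (R := K) c : C ⊗[K] C) = t
  induction t using TensorProduct.induction_on with
  | zero => simp
  | tmul a b => simp [mul_comm]
  | add x y hx hy => simp only [map_add, hx, hy]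

theorem cv_assoc (f g h : C →ₗ[K] K) : cv (cv f g) h = cv f (cv g h) := by
  have e1 : TensorProduct.map ((LinearMap.mul' K K).comp
        ((TensorProduct.map f g).comp (comul (R := K)))) h
      = (TensorProduct.map ((LinearMap.mul' K K).comp (TensorProduct.map f g)) h).comp
        (LinearMap.rTensor C (comul (R := K))) := by
    apply TensorProduct.ext'
    intro a b
    simp
  have e2 : TensorProduct.map f ((LinearMap.mul' K K).comp
        ((TensorProduct.map g h).comp (comul (R := K))))
      = (TensorProduct.map f ((LinearMap.mul' K K).comp (TensorProduct.map g h))).comp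
        (LinearMap.lTensor C (comul (R := K))) := by
    apply TensorProduct.ext'
    intro a b
    simp
  simp only [cv]
  rw [e1, e2]
  ext c
  simp only [LinearMap.comp_apply]
  rw [← Coalgebra.coassoc_symm_apply (R := K) c]
  generalize ((comul (R := K)).lTensor C) (comul (R := K) c) = t
  induction t using TensorProduct.induction_on with
  | zero => simp
  | tmul a v =>
    induction v using TensorProduct.induction_on with
    | zero => simp
    | tmul b c' => simp [mul_assoc]
    | add x y hx hy => simp only [tmul_add, map_add, hx, hy]
  | add x y hx hy => simp only [map_add, hx, hy]

theorem map_counit_right (f : C →ₗ[K] K) :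
    TensorProduct.map f (counit (R := K) (A := C))
      = (LinearMap.rTensor K f).comp (LinearMap.lTensor C (counit (R := K))) := by
  apply TensorProduct.ext'
  intro a b
  simp

theorem map_counit_left (f : C →ₗ[K] K) :
    TensorProduct.map (counit (R := K) (A := C)) f
      = (LinearMap.lTensor K f).comp (LinearMap.rTensor C (counit (R := K))) := by
  apply TensorProduct.ext'
  intro a b
  simp

theorem cv_counit_right (f : C →ₗ[K] K) : cv f (counit (R := K)) = f := by
  ext c
  simp only [cv, LinearMap.comp_apply, map_counit_right]
  rw [Coalgebra.lTensor_counit_comul (R := K)]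
  simp

theorem cv_counit_left (f : C →ₗ[K] K) : cv (counit (R := K)) f = f := by
  ext c
  simp only [cv, LinearMap.comp_apply, map_counit_left]
  rw [Coalgebra.rTensor_counit_comul (R := K)]
  simp

theorem eps_eps (c : C) :
    LinearMap.mul' K K (TensorProduct.map (counit (R := K)) (counit (R := K))
      (comul (R := K) c)) = counit (R := K) c := by
  rw [map_counit_right, LinearMap.comp_apply, Coalgebra.lTensor_counit_comul (R := K)]
  simp

theorem cv_pullback (π : C →ₗ[K] D)
    (hπ : (comul (R := K)).comp π = (TensorProduct.map π π).comp (comul (R := K)))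
    (f g : D →ₗ[K] K) : cv (f.comp π) (g.comp π) = (cv f g).comp π := by
  ext c
  have h2 := LinearMap.congr_fun hπ c
  simp only [LinearMap.comp_apply] at h2
  simp only [cv, LinearMap.comp_apply, TensorProduct.map_comp]
  rw [← h2]

theorem tensor_cocomm
    (hC : ∀ c : C, TensorProduct.comm K C C (comul (R := K) c) = comul (R := K) c)
    (hD : ∀ d : D, TensorProduct.comm K D D (comul (R := K) d) = comul (R := K) d) :
    ∀ x : C ⊗[K] D,
      TensorProduct.comm K (C ⊗[K] D) (C ⊗[K] D) (comul (R := K) x) = comul (R := K) x := by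
  intro x
  induction x using TensorProduct.induction_on with
  | zero => simp
  | add x y hx hy => simp only [map_add, hx, hy]
  | tmul c d =>
    have hcd : comul (R := K) (c ⊗ₜ[K] d)
        = TensorProduct.tensorTensorTensorComm K C C D D (comul (R := K) c ⊗ₜ comul (R := K) d) :=
      rfl
    rw [hcd]
    conv_rhs => rw [← hC c, ← hD d]
    generalize (comul (R := K) c : C ⊗[K] C) = s
    generalize (comul (R := K) d : D ⊗[K] D) = t
    induction s using TensorProduct.induction_on with
    | zero => simp
    | add x y hx hy => simp only [add_tmul, map_add, hx, hy]
    | tmul a b =>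
      induction t using TensorProduct.induction_on with
      | zero => simp
      | add x y hx hy => simp only [tmul_add, map_add, hx, hy]
      | tmul u v => simp [tensorTensorTensorComm_tmul]

/-- projection killing the left factor with the counit -/
def pL : C ⊗[K] D →ₗ[K] D :=
  (TensorProduct.lid K D).toLinearMap.comp (LinearMap.rTensor D (counit (R := K)))

/-- projection killing the right factor with the counit -/
def pR : C ⊗[K] D →ₗ[K] C :=
  (TensorProduct.rid K C).toLinearMap.comp (LinearMap.lTensor C (counit (R := K)))

@[simp] theorem pL_tmul (c : C) (d : D) : pL (K := K) (c ⊗ₜ d) = counit (R := K) c • d := by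
  simp [pL]

@[simp] theorem pR_tmul (c : C) (d : D) : pR (K := K) (c ⊗ₜ d) = counit (R := K) d • c := by
  simp [pR]

theorem comul_pL : (comul (R := K)).comp (pL (K := K) (C := C) (D := D))
    = (TensorProduct.map pL pL).comp (comul (R := K)) := by
  apply TensorProduct.ext'
  intro c d
  simp only [LinearMap.comp_apply, pL_tmul, map_smul]
  have hcd : comul (R := K) (c ⊗ₜ[K] d)
      = TensorProduct.tensorTensorTensorComm K C C D D (comul (R := K) c ⊗ₜ comul (R := K) d) :=
    rfl
  rw [hcd, ← eps_eps (K := K) c]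
  generalize (comul (R := K) c : C ⊗[K] C) = s
  induction s using TensorProduct.induction_on with
  | zero => simp
  | add x y hx hy => simp only [add_tmul, map_add, hx, hy, add_smul]
  | tmul a b =>
    generalize (comul (R := K) d : D ⊗[K] D) = t
    induction t using TensorProduct.induction_on with
    | zero => simp
    | add x y hx hy => simp only [tmul_add, map_add, hx, hy, smul_add]
    | tmul u v =>
      simp [tensorTensorTensorComm_tmul, smul_tmul', tmul_smul, smul_smul, mul_comm]

theorem comul_pR : (comul (R := K)).comp (pR (K := K) (C := C) (D := D))
    = (TensorProduct.map pR pR).comp (comul (R := K)) := by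
  apply TensorProduct.ext'
  intro c d
  simp only [LinearMap.comp_apply, pR_tmul, map_smul]
  have hcd : comul (R := K) (c ⊗ₜ[K] d)
      = TensorProduct.tensorTensorTensorComm K C C D D (comul (R := K) c ⊗ₜ comul (R := K) d) :=
    rfl
  rw [hcd, ← eps_eps (K := K) d]
  generalize (comul (R := K) d : D ⊗[K] D) = t
  induction t using TensorProduct.induction_on with
  | zero => simp
  | add x y hx hy => simp only [tmul_add, map_add, hx, hy, add_smul]
  | tmul a b =>
    generalize (comul (R := K) c : C ⊗[K] C) = s
    induction s using TensorProduct.induction_on with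
    | zero => simp
    | add x y hx hy => simp only [add_tmul, map_add, hx, hy, smul_add]
    | tmul u v =>
      simp [tensorTensorTensorComm_tmul, smul_tmul', tmul_smul, smul_smul, mul_comm]

theorem cv_cancel
    (hc : ∀ c : C, TensorProduct.comm K C C (comul (R := K) c) = comul (R := K) c)
    (f g h : C →ₗ[K] K) (hfh : cv f h = counit (R := K)) : cv (cv f g) h = g := by
  rw [cv_comm hc f g, cv_assoc, hfh, cv_counit_right]

theorem cv_cancel' (f g h : C →ₗ[K] K) (hgh : cv g h = counit (R := K)) :
    cv (cv f g) h = f := by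
  rw [cv_assoc, hgh, cv_counit_right]

end CartAux

-- === bridge lemmas ===
namespace CartAux
open TensorProduct LinearMap Coalgebra

theorem f23_eq (f : H ⊗[k] H →ₗ[k] k) :
    f23 k H f = f.comp (pL (K := k) (C := H) (D := H ⊗[k] H)) := by
  apply TensorProduct.ext'
  intro a x
  simp [f23, pL]

/-- the map `a⊗b⊗c ↦ ε(c)•(a⊗b)` -/
def p12 : H ⊗[k] (H ⊗[k] H) →ₗ[k] H ⊗[k] H :=
  (pR (K := k) (C := H ⊗[k] H) (D := H)).comp (TensorProduct.assoc k H H H).symm.toLinearMap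

theorem f12_eq (f : H ⊗[k] H →ₗ[k] k) : f12 k H f = f.comp (p12 k H) := by
  apply TensorProduct.ext'
  intro a y
  induction y using TensorProduct.induction_on with
  | zero => simp
  | tmul b c => simp [f12, p12, pR, mul_comm]
  | add x y hx hy => simp only [tmul_add, map_add, hx, hy]

theorem associnv_comul (x : H ⊗[k] (H ⊗[k] H)) :
    comul (R := k) ((TensorProduct.assoc k H H H).symm.toLinearMap x)
      = TensorProduct.map (TensorProduct.assoc k H H H).symm.toLinearMap
          (TensorProduct.assoc k H H H).symm.toLinearMap (comul (R := k) x) := by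
  have h := (Coalgebra.TensorProduct.assoc (R := k) (S := k) (M := H) (N := H) (P := H)).symm.map_comp_comul
  have h2 := LinearMap.congr_fun h x
  simp only [LinearMap.comp_apply] at h2
  exact h2.symm

theorem comul_p12 : (comul (R := k)).comp (p12 k H)
    = (TensorProduct.map (p12 k H) (p12 k H)).comp (comul (R := k)) := by
  apply LinearMap.ext
  intro x
  have h1 := LinearMap.congr_fun (comul_pR (K := k) (C := H ⊗[k] H) (D := H))
    ((TensorProduct.assoc k H H H).symm.toLinearMap x)
  simp only [LinearMap.comp_apply] at h1
  simp only [p12, LinearMap.comp_apply]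
  rw [h1, associnv_comul, ← LinearMap.comp_apply (TensorProduct.map _ _),
    ← TensorProduct.map_comp]

theorem f12_conv (f g : H ⊗[k] H →ₗ[k] k) :
    conv3 k H (f12 k H f) (f12 k H g) = f12 k H (conv2 k H f g) := by
  rw [f12_eq k H f, f12_eq k H g, f12_eq k H (conv2 k H f g)]
  exact cv_pullback _ (comul_p12 k H) f g

theorem f23_conv (f g : H ⊗[k] H →ₗ[k] k) :
    conv3 k H (f23 k H f) (f23 k H g) = f23 k H (conv2 k H f g) := by
  rw [f23_eq k H f, f23_eq k H g, f23_eq k H (conv2 k H f g)]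
  exact cv_pullback _ (comul_pL (K := k) (C := H) (D := H ⊗[k] H)) f g

theorem f12_counit :
    f12 k H (Coalgebra.counit (R := k) (A := H ⊗[k] H))
      = Coalgebra.counit (R := k) (A := H ⊗[k] (H ⊗[k] H)) := by
  apply TensorProduct.ext'
  intro a y
  induction y using TensorProduct.induction_on with
  | zero => simp
  | tmul b c => simp [f12, mul_assoc]; ring
  | add x y hx hy => simp only [tmul_add, map_add, hx, hy]

theorem f23_counit :
    f23 k H (Coalgebra.counit (R := k) (A := H ⊗[k] H))
      = Coalgebra.counit (R := k) (A := H ⊗[k] (H ⊗[k] H)) := by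
  apply TensorProduct.ext'
  intro a y
  induction y using TensorProduct.induction_on with
  | zero => simp
  | tmul b c => simp [f23, mul_assoc]; ring
  | add x y hx hy => simp only [tmul_add, map_add, hx, hy]

theorem smms
    (hcc2 : ∀ x : H ⊗[k] H,
      TensorProduct.comm k (H ⊗[k] H) (H ⊗[k] H) (comul (R := k) x) = comul (R := k) x)
    (f : H ⊗[k] H →ₗ[k] k) (g : H ⊗[k] H →ₗ[k] H) :
    convSM k H f g = convMS k H g f := by
  apply LinearMap.ext
  intro x
  simp only [convSM, convMS, LinearMap.comp_apply, LinearEquiv.coe_coe]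
  conv_lhs => rw [← hcc2 x]
  generalize (comul (R := k) x : (H ⊗[k] H) ⊗[k] (H ⊗[k] H)) = t
  induction t using TensorProduct.induction_on with
  | zero => simp
  | tmul u v => simp
  | add x y hx hy => simp only [map_add, hx, hy]

theorem E12
    (hcc3 : ∀ x : H ⊗[k] (H ⊗[k] H),
      TensorProduct.comm k _ _ (comul (R := k) x) = comul (R := k) x)
    (R Rinv χ : H ⊗[k] H →ₗ[k] k)
    (hRinv2 : conv2 k H Rinv R = Coalgebra.counit (R := k) (A := H ⊗[k] H)) :
    conv3 k H (conv3 k H (f12 k H Rinv) (f13 k H χ)) (f12 k H R) = f13 k H χ := by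
  have h1 : conv3 k H (f12 k H Rinv) (f12 k H R)
      = Coalgebra.counit (R := k) (A := H ⊗[k] (H ⊗[k] H)) := by
    rw [f12_conv, hRinv2, f12_counit]
  exact cv_cancel hcc3 (f12 k H Rinv) (f13 k H χ) (f12 k H R) h1

theorem E23
    (hcc3 : ∀ x : H ⊗[k] (H ⊗[k] H),
      TensorProduct.comm k _ _ (comul (R := k) x) = comul (R := k) x)
    (R Rinv χ : H ⊗[k] H →ₗ[k] k)
    (hRinv2 : conv2 k H Rinv R = Coalgebra.counit (R := k) (A := H ⊗[k] H)) :
    conv3 k H (conv3 k H (f23 k H Rinv) (f13 k H χ)) (f23 k H R) = f13 k H χ := by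
  have h1 : conv3 k H (f23 k H Rinv) (f23 k H R)
      = Coalgebra.counit (R := k) (A := H ⊗[k] (H ⊗[k] H)) := by
    rw [f23_conv, hRinv2, f23_counit]
  exact cv_cancel hcc3 (f23 k H Rinv) (f13 k H χ) (f23 k H R) h1

theorem sym_fwd
    (hcc2 : ∀ x : H ⊗[k] H,
      TensorProduct.comm k (H ⊗[k] H) (H ⊗[k] H) (comul (R := k) x) = comul (R := k) x)
    (R Rinv χ : H ⊗[k] H →ₗ[k] k)
    (hRinv1 : conv2 k H R Rinv = Coalgebra.counit (R := k) (A := H ⊗[k] H))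
    (E : conv2 k H R χ = conv2 k H (χ.comp (TensorProduct.comm k H H).toLinearMap) R) :
    χ.comp (TensorProduct.comm k H H).toLinearMap = χ := by
  have a1 := cv_cancel' (χ.comp (TensorProduct.comm k H H).toLinearMap) R Rinv hRinv1
  have a2 := cv_cancel' χ R Rinv hRinv1
  calc χ.comp (TensorProduct.comm k H H).toLinearMap
      = cv (conv2 k H (χ.comp (TensorProduct.comm k H H).toLinearMap) R) Rinv := a1.symm
    _ = cv (conv2 k H R χ) Rinv := by rw [E]
    _ = cv (cv χ R) Rinv :=
        congrArg (fun t => cv t Rinv) (show cv R χ = cv χ R from cv_comm hcc2 R χ)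
    _ = χ := a2

theorem sym_bwd
    (hcc2 : ∀ x : H ⊗[k] H,
      TensorProduct.comm k (H ⊗[k] H) (H ⊗[k] H) (comul (R := k) x) = comul (R := k) x)
    (R χ : H ⊗[k] H →ₗ[k] k)
    (hs : χ.comp (TensorProduct.comm k H H).toLinearMap = χ) :
    conv2 k H R χ = conv2 k H (χ.comp (TensorProduct.comm k H H).toLinearMap) R := by
  rw [hs]
  exact cv_comm hcc2 R χ

end CartAux

/-- for a cocommutative bialgebra `H` with coquasitriangular structure `R`,
a linear `χ : H⊗H → k` makes `(H,R,χ)` pre-Cartier iff `χ` is a biderivation, and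
Cartier iff `χ` is additionally symmetric. -/
theorem cocommutative_preCartier_iff_biderivation
    (hcocomm : ∀ h : H,
      TensorProduct.comm k H H (Coalgebra.comul (R := k) h) = Coalgebra.comul (R := k) h)
    (R Rinv χ : H ⊗[k] H →ₗ[k] k)
    (hRinv1 : conv2 k H R Rinv = Coalgebra.counit (R := k) (A := H ⊗[k] H))
    (hRinv2 : conv2 k H Rinv R = Coalgebra.counit (R := k) (A := H ⊗[k] H))
    (hct1 : convSM k H R (LinearMap.mul' k H)
      = convMS k H ((LinearMap.mul' k H).comp (TensorProduct.comm k H H).toLinearMap) R)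
    (hct2 : R.comp (idMulC3 k H) = conv3 k H (f13 k H R) (f12 k H R))
    (hct3 : R.comp (mulIdC3 k H) = conv3 k H (f13 k H R) (f23 k H R)) :
    ((convSM k H χ (LinearMap.mul' k H) = convMS k H (LinearMap.mul' k H) χ ∧
        χ.comp (idMulC3 k H)
          = f12 k H χ + conv3 k H (conv3 k H (f12 k H Rinv) (f13 k H χ)) (f12 k H R) ∧
        χ.comp (mulIdC3 k H)
          = f23 k H χ + conv3 k H (conv3 k H (f23 k H Rinv) (f13 k H χ)) (f23 k H R)) ↔
      (χ.comp (idMulC3 k H) = f12 k H χ + f13 k H χ ∧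
        χ.comp (mulIdC3 k H) = f23 k H χ + f13 k H χ)) ∧
    ((convSM k H χ (LinearMap.mul' k H) = convMS k H (LinearMap.mul' k H) χ ∧
        χ.comp (idMulC3 k H)
          = f12 k H χ + conv3 k H (conv3 k H (f12 k H Rinv) (f13 k H χ)) (f12 k H R) ∧
        χ.comp (mulIdC3 k H)
          = f23 k H χ + conv3 k H (conv3 k H (f23 k H Rinv) (f13 k H χ)) (f23 k H R) ∧
        conv2 k H R χ = conv2 k H (χ.comp (TensorProduct.comm k H H).toLinearMap) R) ↔
      (χ.comp (idMulC3 k H) = f12 k H χ + f13 k H χ ∧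
        χ.comp (mulIdC3 k H) = f23 k H χ + f13 k H χ ∧
        χ.comp (TensorProduct.comm k H H).toLinearMap = χ)) := by
  have hcc2 := CartAux.tensor_cocomm (K := k) (C := H) (D := H) hcocomm hcocomm
  have hcc3 := CartAux.tensor_cocomm (K := k) (C := H) (D := H ⊗[k] H) hcocomm hcc2
  have e12 := CartAux.E12 k H hcc3 R Rinv χ hRinv2
  have e23 := CartAux.E23 k H hcc3 R Rinv χ hRinv2
  have t1 := CartAux.smms k H hcc2 χ (LinearMap.mul' k H)
  constructor
  · constructor
    · rintro ⟨-, h2, h3⟩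
      exact ⟨by rw [h2, e12], by rw [h3, e23]⟩
    · rintro ⟨h2, h3⟩
      exact ⟨t1, by rw [h2, e12], by rw [h3, e23]⟩
  · constructor
    · rintro ⟨-, h2, h3, h4⟩
      exact ⟨by rw [h2, e12], by rw [h3, e23],
        CartAux.sym_fwd k H hcc2 R Rinv χ hRinv1 h4⟩
    · rintro ⟨h2, h3, h4⟩
      exact ⟨t1, by rw [h2, e12], by rw [h3, e23],
        CartAux.sym_bwd k H hcc2 R χ h4⟩

end
end
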